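/- A finite sequence (d_1, …, d_n) of nonnegative integers is the preorder degree sequence of some rooted ordered tree with n nodes if and only if ∑_{i=1}^n d_i = n − 1 and for every 1 ≤ j < n, ∑_{i=1}^j d_i ≥ j. -/

import Mathlib

/-- Ordered rooted (unlabeled) trees. -/
inductive OTree : Type
  | node : List OTree → OTree

mutual
  /-- Preorder degree sequence of an ordered rooted tree. -/
  def OTree.degSeq : OTree → List ℕ
    | .node ts => ts.length :: OTree.degSeqF ts
  /-- Concatenated preorder degree sequences of a forest. -/
  def OTree.degSeqF : List OTree → List ℕ
    | [] => []
    | t :: ts => OTree.degSeq t ++ OTree.degSeqF ts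
end

lemma degSeqF_append (a b : List OTree) :
    OTree.degSeqF (a ++ b) = OTree.degSeqF a ++ OTree.degSeqF b := by
  induction a with
  | nil => simp [OTree.degSeqF]
  | cons t ts ih => simp [OTree.degSeqF, ih]

lemma forest_spec (ts : List OTree) :
    (OTree.degSeqF ts).sum + ts.length = (OTree.degSeqF ts).length ∧
    ∀ j < (OTree.degSeqF ts).length, j < ((OTree.degSeqF ts).take j).sum + ts.length := by
  match ts with
  | [] => simp [OTree.degSeqF]
  | (.node us) :: ts' =>
    have ih1 := forest_spec us
    have ih2 := forest_spec ts'
    set a := OTree.degSeqF us with ha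
    set b := OTree.degSeqF ts' with hb
    have hdef : OTree.degSeqF (OTree.node us :: ts') = us.length :: (a ++ b) := by
      simp [OTree.degSeqF, OTree.degSeq, ha, hb]
    rw [hdef]
    constructor
    · simp only [List.sum_cons, List.sum_append, List.length_cons, List.length_append,
        List.length_cons]
      omega
    · intro j hj
      match j with
      | 0 => simp
      | (j' + 1) =>
        rw [List.take_succ_cons, List.take_append]
        simp only [List.sum_cons, List.sum_append, List.length_cons, List.length_append] at hj ⊢
        rcases lt_trichotomy j' a.length with h | h | h
        · have := ih1.2 j' h
          omega
        · have hta : a.take j' = a := by simp [h]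
          have hbpos : 0 < b.length := by omega
          have := ih2.2 0 hbpos
          simp at this
          rw [hta]
          omega
        · have hta : a.take j' = a := List.take_of_length_le (by omega)
          have hjb : j' - a.length < b.length := by omega
          have := ih2.2 (j' - a.length) hjb
          rw [hta]
          omega
termination_by sizeOf ts

lemma build (l : List ℕ) : ∀ (k : ℕ), l.sum + k = l.length →
    (∀ j < l.length, j < (l.take j).sum + k) →
    ∃ ts : List OTree, ts.length = k ∧ OTree.degSeqF ts = l := by
  induction l with
  | nil =>
    intro k h1 _
    exact ⟨[], by simpa using h1.symm, rfl⟩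
  | cons d rest ih =>
    intro k h1 h2
    have hk : 1 ≤ k := by have := h2 0 (by simp); simp at this; omega
    simp only [List.sum_cons, List.length_cons] at h1
    have h1' : rest.sum + (k - 1 + d) = rest.length := by omega
    have h2' : ∀ j < rest.length, j < (rest.take j).sum + (k - 1 + d) := by
      intro j hj
      have := h2 (j + 1) (by simp; omega)
      rw [List.take_succ_cons] at this
      simp only [List.sum_cons] at this
      omega
    obtain ⟨ts', hlen, hseq⟩ := ih (k - 1 + d) h1' h2'
    have hd : d ≤ ts'.length := by omega
    refine ⟨OTree.node (ts'.take d) :: ts'.drop d, ?_, ?_⟩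
    · simp only [List.length_cons, List.length_drop]
      omega
    · have : OTree.degSeqF (OTree.node (ts'.take d) :: ts'.drop d)
          = (ts'.take d).length :: (OTree.degSeqF (ts'.take d) ++ OTree.degSeqF (ts'.drop d)) := by
        simp [OTree.degSeqF, OTree.degSeq]
      rw [this, ← degSeqF_append, List.take_append_drop, hseq,
        List.length_take, min_eq_left hd]

/-- A sequence `(d₁, …, dₙ)` of nonnegative integers is the preorder degree sequence of
some rooted ordered tree with `n` nodes iff `∑ dᵢ = n - 1` and every proper prefix
satisfies `∑_{i ≤ j} dᵢ ≥ j`. -/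
theorem stmt13 (n : ℕ) (hn : 1 ≤ n) (l : List ℕ) (hl : l.length = n) :
    (∃ t : OTree, OTree.degSeq t = l) ↔
      (l.sum = n - 1 ∧ ∀ j, 1 ≤ j → j < n → j ≤ (l.take j).sum) := by
  constructor
  · rintro ⟨t, rfl⟩
    have hspec := forest_spec [t]
    have hone : OTree.degSeqF [t] = OTree.degSeq t := by
      simp [OTree.degSeqF]
    rw [hone] at hspec
    obtain ⟨h1, h2⟩ := hspec
    simp only [List.length_cons, List.length_nil] at h1 h2
    constructor
    · omega
    · intro j hj1 hj2
      have := h2 j (by omega)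
      omega
  · rintro ⟨hs, hp⟩
    obtain ⟨ts, hlen, hseq⟩ := build l 1 (by omega) (by
      intro j hj
      match j with
      | 0 => simp
      | (j' + 1) =>
        have := hp (j' + 1) (by omega) (by omega)
        omega)
    match ts, hlen with
    | [t], _ =>
      refine ⟨t, ?_⟩
      have : OTree.degSeqF [t] = OTree.degSeq t := by simp [OTree.degSeqF]
      rw [← this, hseq]
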